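/- Free-lunch privacy as a PML constraint under product priors: For every ε ≥ 0, the mechanism p satisfies ε-free-lunch privacy if and only if for every full-support product prior q on 𝒟^n, every x ∈ 𝒟^n, and every y ∈ 𝒴: p(x)(y) ≤ e^ε · Σ_{x'∈𝒟^n} p(x')(y) · q(x'). (The displayed inequality is the pointwise-maximal-leakage constraint ℓ(X → y) ≤ ε.) -/

import Mathlib

open Finset

/-- A probability mass function on a finite type. -/
def IsPMF {α : Type*} [Fintype α] (p : α → ℝ) : Prop :=
  (∀ a, 0 ≤ p a) ∧ ∑ a, p a = 1

/-- A mechanism on databases: a conditional pmf from `𝒟^n` to `𝒴`. -/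
def IsMechanism {𝒟 𝒴 : Type*} [Fintype 𝒴] {n : ℕ}
    (p : (Fin n → 𝒟) → 𝒴 → ℝ) : Prop :=
  ∀ x, (∀ y, 0 ≤ p x y) ∧ ∑ y, p x y = 1

/-- `ε`-differential privacy. -/
def DiffPrivate {𝒟 𝒴 : Type*} {n : ℕ} (p : (Fin n → 𝒟) → 𝒴 → ℝ) (ε : ℝ) : Prop :=
  ∀ (x : Fin n → 𝒟) (i : Fin n) (d' : 𝒟) (y : 𝒴),
    p x y ≤ Real.exp ε * p (Function.update x i d') y

/-- `ε`-free-lunch privacy. -/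
def FreeLunch {𝒟 𝒴 : Type*} {n : ℕ} (p : (Fin n → 𝒟) → 𝒴 → ℝ) (ε : ℝ) : Prop :=
  ∀ (x x' : Fin n → 𝒟) (y : 𝒴), p x y ≤ Real.exp ε * p x' y

/-- **Free-lunch privacy as a PML constraint under product priors.** The mechanism `p`
satisfies `ε`-free-lunch privacy iff for every full-support product prior
`q(x) = Π_j q_j(x_j)`, every database `x`, and every outcome `y`,
`p(x)(y) ≤ e^ε · Σ_{x'} p(x')(y) · q(x')`, i.e. the PML constraint `ℓ(X → y) ≤ ε`. -/
theorem free_lunch_iff_pml_product_priors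
    {𝒟 𝒴 : Type*} [Fintype 𝒟] [Fintype 𝒴] [Nonempty 𝒴]
    (hD : 2 ≤ Fintype.card 𝒟) {n : ℕ} (hn : 1 ≤ n)
    (p : (Fin n → 𝒟) → 𝒴 → ℝ) (hp : IsMechanism p)
    (ε : ℝ) (hε : 0 ≤ ε) :
    FreeLunch p ε ↔
      ∀ qi : Fin n → 𝒟 → ℝ, (∀ i, IsPMF (qi i)) → (∀ i d, 0 < qi i d) →
        ∀ (x : Fin n → 𝒟) (y : 𝒴),
          p x y ≤ Real.exp ε * ∑ x' : Fin n → 𝒟, p x' y * ∏ j, qi j (x' j) := by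
  constructor
  · intro h qi hq hqpos x y
    have hq1 : ∑ x' : Fin n → 𝒟, ∏ j, qi j (x' j) = 1 := by
      rw [← Fintype.piFinset_univ, ← Finset.prod_univ_sum]
      simp [(hq _).2]
    have hqnn : ∀ x' : Fin n → 𝒟, 0 ≤ ∏ j, qi j (x' j) := fun x' =>
      Finset.prod_nonneg fun j _ => (hq j).1 _
    calc p x y = ∑ x' : Fin n → 𝒟, p x y * ∏ j, qi j (x' j) := by
          rw [← Finset.mul_sum, hq1, mul_one]
      _ ≤ ∑ x' : Fin n → 𝒟, Real.exp ε * (p x' y * ∏ j, qi j (x' j)) := by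
          refine Finset.sum_le_sum fun x' _ => ?_
          rw [← mul_assoc]
          exact mul_le_mul_of_nonneg_right (h x x' y) (hqnn x')
      _ = _ := by rw [← Finset.mul_sum]
  · intro h x x' y
    classical
    have hple : ∀ z : Fin n → 𝒟, p z y ≤ 1 := fun z =>
      (hp z).2 ▸ Finset.single_le_sum (fun y' _ => (hp z).1 y') (mem_univ y)
    have hpnn : ∀ z : Fin n → 𝒟, 0 ≤ p z y := fun z => (hp z).1 y
    refine le_of_forall_pos_le_add fun η hη => ?_
    have hnpos : (0:ℝ) < n := by exact_mod_cast hn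
    have hepos : (0:ℝ) < Real.exp ε := Real.exp_pos ε
    set δ : ℝ := min (η / (Real.exp ε * n)) (1/2) with hδdef
    have hδpos : 0 < δ := lt_min (by positivity) (by norm_num)
    have hδlt1 : δ < 1 := lt_of_le_of_lt (min_le_right _ _) (by norm_num)
    have hm1 : (1:ℝ) ≤ (Fintype.card 𝒟 : ℝ) - 1 := by
      have : (2:ℝ) ≤ (Fintype.card 𝒟 : ℝ) := by exact_mod_cast hD
      linarith
    have hm0 : (0:ℝ) < (Fintype.card 𝒟 : ℝ) - 1 := by linarith
    set qi : Fin n → 𝒟 → ℝ := fun i d =>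
      if d = x' i then 1 - δ else δ / ((Fintype.card 𝒟 : ℝ) - 1) with hqidef
    have hqpos : ∀ i d, 0 < qi i d := by
      intro i d
      simp only [hqidef]
      split
      · linarith
      · positivity
    have hqsum : ∀ i, ∑ d, qi i d = 1 := by
      intro i
      rw [← Finset.sum_erase_add _ _ (mem_univ (x' i))]
      have h1 : ∑ d ∈ univ.erase (x' i), qi i d
          = ((Fintype.card 𝒟 : ℝ) - 1) * (δ / ((Fintype.card 𝒟 : ℝ) - 1)) := by
        rw [Finset.sum_congr rfl fun d hd => if_neg (Finset.ne_of_mem_erase hd)]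
        rw [Finset.sum_const, Finset.card_erase_of_mem (mem_univ _), Finset.card_univ,
          nsmul_eq_mul, Nat.cast_sub (by omega), Nat.cast_one]
      rw [h1]
      have : qi i (x' i) = 1 - δ := if_pos rfl
      rw [this]
      field_simp
      ring
    have hqpmf : ∀ i, IsPMF (qi i) := fun i => ⟨fun d => (hqpos i d).le, hqsum i⟩
    have hqnn : ∀ z : Fin n → 𝒟, 0 ≤ ∏ j, qi j (z j) := fun z =>
      Finset.prod_nonneg fun j _ => (hqpos j _).le
    have hqtot : ∑ z : Fin n → 𝒟, ∏ j, qi j (z j) = 1 := by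
      rw [← Fintype.piFinset_univ, ← Finset.prod_univ_sum]
      simp [hqsum]
    have hqx' : ∏ j, qi j (x' j) = (1 - δ) ^ n := by
      rw [Finset.prod_congr rfl fun j _ => if_pos rfl]
      simp
    have hbern : 1 - (n:ℝ) * δ ≤ (1 - δ) ^ n := by
      have := one_add_mul_le_pow (a := -δ) (by linarith) n
      simpa [sub_eq_add_neg, mul_comm] using this
    -- bound the mixture
    have hS : ∑ z : Fin n → 𝒟, p z y * ∏ j, qi j (z j) ≤ p x' y + n * δ := by
      rw [← Finset.sum_erase_add _ _ (mem_univ x')]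
      have h2 : p x' y * ∏ j, qi j (x' j) ≤ p x' y := by
        rw [hqx']
        have h3 : (1 - δ) ^ n ≤ 1 := pow_le_one₀ (by linarith) (by linarith)
        nlinarith [hpnn x']
      have h4 : ∑ z ∈ univ.erase x', p z y * ∏ j, qi j (z j)
          ≤ ∑ z ∈ univ.erase x', ∏ j, qi j (z j) := by
        refine Finset.sum_le_sum fun z _ => ?_
        nlinarith [hple z, hpnn z, hqnn z]
      have h5 : ∑ z ∈ univ.erase x', ∏ j, qi j (z j) = 1 - (1 - δ) ^ n := by
        have := Finset.sum_erase_add univ (fun z : Fin n → 𝒟 => ∏ j, qi j (z j))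
          (mem_univ x')
        rw [hqtot, hqx'] at this
        linarith
      have h6 : 1 - (1 - δ) ^ n ≤ n * δ := by linarith
      linarith
    have hmain := h qi hqpmf hqpos x y
    have hδle : Real.exp ε * (n * δ) ≤ η := by
      have hδle' : δ ≤ η / (Real.exp ε * n) := min_le_left _ _
      rw [le_div_iff₀ (by positivity)] at hδle'
      nlinarith
    calc p x y ≤ Real.exp ε * ∑ z : Fin n → 𝒟, p z y * ∏ j, qi j (z j) := hmain
      _ ≤ Real.exp ε * (p x' y + n * δ) := by
          exact mul_le_mul_of_nonneg_left hS hepos.le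
      _ = Real.exp ε * p x' y + Real.exp ε * (n * δ) := by ring
      _ ≤ Real.exp ε * p x' y + η := by linarith
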